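/- Let σ2 > 0, B > 0, β(x) = σ2·(2^{x/B} − 1), β'(x) = (σ2·ln 2 / B)·2^{x/B}, g(x) = β(x) − x·β'(x), and fix g̃ > 0, p_c > 0, μ > 0, α > 0, κ > 0, C > 0, R > 0, T > 0. For λ > 0 let r(λ) > 0 be the unique solution of g(r) = −g̃·(μ/λ + p_c), and let ℓ(λ) = max(R − √((T²/(3·κ·C³))·(α/λ + β'(r(λ))/g̃)), 0). Then for any 0 < λ₁ < λ₂ one has r(λ₂) < r(λ₁) and ℓ(λ₁) ≤ ℓ(λ₂). -/

import Mathlib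

/-- Remark 1, property 3: a larger dual variable `λ` yields a smaller optimal
offloading rate `r(λ)` and a larger (well, no smaller) number of offloaded
bits `ℓ(λ)`. -/
theorem stmt4 (σ2 B : ℝ) (hσ2 : 0 < σ2) (hB : 0 < B)
    (β β' g : ℝ → ℝ)
    (hβ : ∀ x, β x = σ2 * ((2 : ℝ) ^ (x / B) - 1))
    (hβ' : ∀ x, β' x = σ2 * Real.log 2 / B * (2 : ℝ) ^ (x / B))
    (hg : ∀ x, g x = β x - x * β' x)
    (gtld pc μ α κ C R T : ℝ)
    (hgtld : 0 < gtld) (hpc : 0 < pc) (hμ : 0 < μ) (hα : 0 < α)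
    (hκ : 0 < κ) (hC : 0 < C) (hR : 0 < R) (hT : 0 < T)
    (r : ℝ → ℝ)
    (hr : ∀ lam : ℝ, 0 < lam → 0 < r lam ∧ g (r lam) = -(gtld * (μ / lam + pc)))
    (ℓ : ℝ → ℝ)
    (hℓ : ∀ lam : ℝ, ℓ lam =
      max (R - Real.sqrt (T ^ 2 / (3 * κ * C ^ 3) * (α / lam + β' (r lam) / gtld))) 0)
    (lam₁ lam₂ : ℝ) (hlam₁ : 0 < lam₁) (hlt : lam₁ < lam₂) :
    r lam₂ < r lam₁ ∧ ℓ lam₁ ≤ ℓ lam₂ := by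
  have hlam₂ : 0 < lam₂ := hlam₁.trans hlt
  obtain ⟨hr₁pos, hr₁⟩ := hr lam₁ hlam₁
  obtain ⟨hr₂pos, hr₂⟩ := hr lam₂ hlam₂
  have hlog2 : 0 < Real.log 2 := Real.log_pos (by norm_num)
  -- the explicit function G equals g
  set G : ℝ → ℝ := fun x => σ2 * ((2 : ℝ) ^ (x / B) - 1) -
      x * (σ2 * Real.log 2 / B * (2 : ℝ) ^ (x / B)) with hG
  have hgG : ∀ x, g x = G x := by
    intro x; rw [hg, hβ, hβ', hG]
  -- derivative of G
  have hderiv : ∀ x : ℝ, HasDerivAt G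
      (-(x * σ2 * (Real.log 2 / B) ^ 2 * (2 : ℝ) ^ (x / B))) x := by
    intro x
    have hf : HasDerivAt (fun y : ℝ => (2 : ℝ) ^ (y / B))
        ((2 : ℝ) ^ (x / B) * Real.log 2 / B) x := by
      have h1 : HasDerivAt (fun y : ℝ => (2 : ℝ) ^ y)
          ((2 : ℝ) ^ (x / B) * Real.log 2) (x / B) :=
        (Real.hasStrictDerivAt_const_rpow (by norm_num : (0:ℝ) < 2) (x / B)).hasDerivAt
      have h2 : HasDerivAt (fun y : ℝ => y / B) (1 / B) x := by
        simpa using (hasDerivAt_id x).div_const B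
      have := h1.comp x h2
      simpa [Function.comp_def, mul_comm, mul_assoc, mul_left_comm, div_eq_mul_inv] using this
    have h3 : HasDerivAt G
        (σ2 * ((2 : ℝ) ^ (x / B) * Real.log 2 / B) -
          (1 * (σ2 * Real.log 2 / B * (2 : ℝ) ^ (x / B)) +
            x * (σ2 * Real.log 2 / B * ((2 : ℝ) ^ (x / B) * Real.log 2 / B)))) x := by
      exact ((hf.sub_const 1).const_mul σ2).sub
        ((hasDerivAt_id x).mul ((hf.const_mul (σ2 * Real.log 2 / B))))
    convert h3 using 1
    ring
  have hstrict : StrictAntiOn G (Set.Ici (0 : ℝ)) := by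
    apply strictAntiOn_of_deriv_neg (convex_Ici 0)
    · exact fun x _ => (hderiv x).differentiableAt.continuousAt.continuousWithinAt
    · intro x hx
      rw [interior_Ici] at hx
      rw [(hderiv x).deriv]
      have : 0 < x * σ2 * (Real.log 2 / B) ^ 2 * (2 : ℝ) ^ (x / B) := by
        apply mul_pos
        · apply mul_pos (mul_pos hx hσ2)
          positivity
        · positivity
      linarith
  -- g r₂ > g r₁
  have hglt : g (r lam₁) < g (r lam₂) := by
    rw [hr₁, hr₂]
    have h1 : μ / lam₂ < μ / lam₁ := by
      apply div_lt_div_of_pos_left hμ hlam₁ hlt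
    nlinarith
  have hrlt : r lam₂ < r lam₁ := by
    rw [hgG, hgG] at hglt
    exact (hstrict.lt_iff_gt (le_of_lt hr₁pos) (le_of_lt hr₂pos)).mp hglt
  refine ⟨hrlt, ?_⟩
  -- β' is monotone
  have hβ'le : β' (r lam₂) ≤ β' (r lam₁) := by
    rw [hβ', hβ']
    have hc : 0 < σ2 * Real.log 2 / B := by positivity
    apply mul_le_mul_of_nonneg_left _ hc.le
    apply Real.rpow_le_rpow_left_iff (by norm_num : (1:ℝ) < 2) |>.mpr
    exact div_le_div_of_nonneg_right hrlt.le hB.le |>.trans_eq rfl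
  have hαle : α / lam₂ ≤ α / lam₁ :=
    div_le_div_of_nonneg_left hα.le hlam₁ hlt.le
  have hcoef : 0 ≤ T ^ 2 / (3 * κ * C ^ 3) := by positivity
  have hsq : Real.sqrt (T ^ 2 / (3 * κ * C ^ 3) * (α / lam₂ + β' (r lam₂) / gtld)) ≤
      Real.sqrt (T ^ 2 / (3 * κ * C ^ 3) * (α / lam₁ + β' (r lam₁) / gtld)) := by
    apply Real.sqrt_le_sqrt
    apply mul_le_mul_of_nonneg_left _ hcoef
    have : β' (r lam₂) / gtld ≤ β' (r lam₁) / gtld :=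
      div_le_div_of_nonneg_right hβ'le hgtld.le |>.trans_eq rfl
    linarith
  rw [hℓ lam₁, hℓ lam₂]
  exact max_le_max (by linarith) le_rfl
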